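/- On a periodic qubit chain of length N ≥ 3 consider H' = Σ_{i} h'_{i,i+1,i+2} with h' = I - |000⟩⟨000| - |W⟩⟨W| where |W⟩ = (|001⟩+|010⟩+|100⟩)/√3. Then the kernel of H' contains the two linearly independent states |0^N⟩ and |W_N⟩ = Σ_{j=1}^{N} |0⋯0 1^{(j)} 0⋯0⟩ (the W state with a single 1 at position j, summed over j). -/

import Mathlib

open Matrix

noncomputable section

/-- The three-qubit computational basis state `|t⟩`. -/
def ket (t : Fin 2 × Fin 2 × Fin 2) : Fin 2 × Fin 2 × Fin 2 → ℂ :=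
  fun p => if p = t then 1 else 0

/-- The W state `|W⟩ = (|001⟩ + |010⟩ + |100⟩)/√3`. -/
def vW : Fin 2 × Fin 2 × Fin 2 → ℂ :=
  fun p => (1 / (Real.sqrt 3 : ℂ)) * (ket (0, 0, 1) p + ket (0, 1, 0) p + ket (1, 0, 0) p)

def proj (v : Fin 2 × Fin 2 × Fin 2 → ℂ) :
    Matrix (Fin 2 × Fin 2 × Fin 2) (Fin 2 × Fin 2 × Fin 2) ℂ :=
  Matrix.vecMulVec v (star v)

/-- `h' = I - |000⟩⟨000| - |W⟩⟨W|`. -/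
def hW : Matrix (Fin 2 × Fin 2 × Fin 2) (Fin 2 × Fin 2 × Fin 2) ℂ :=
  1 - proj (ket (0, 0, 0)) - proj vW

def sitePos {n : ℕ} (hn : 0 < n) (i : ℕ) : Fin n := ⟨i % n, Nat.mod_lt _ hn⟩

/-- `h` acting on sites `i, i+1, i+2` (mod `n`) of a periodic qubit chain. -/
def embed3 {n : ℕ} (hn : 0 < n)
    (h : Matrix (Fin 2 × Fin 2 × Fin 2) (Fin 2 × Fin 2 × Fin 2) ℂ) (i : ℕ) :
    Matrix (Fin n → Fin 2) (Fin n → Fin 2) ℂ :=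
  fun f g =>
    (if ∀ j : Fin n, j ≠ sitePos hn i → j ≠ sitePos hn (i + 1) → j ≠ sitePos hn (i + 2) →
        f j = g j then 1 else 0) *
    h (f (sitePos hn i), f (sitePos hn (i + 1)), f (sitePos hn (i + 2)))
      (g (sitePos hn i), g (sitePos hn (i + 1)), g (sitePos hn (i + 2)))

def basisState {n : ℕ} (c : Fin n → Fin 2) : (Fin n → Fin 2) → ℂ :=
  fun f => if f = c then 1 else 0

/-- The W state of the chain: `|W_N⟩ = Σ_j |0⋯0 1^{(j)} 0⋯0⟩`. -/
def wChain (N : ℕ) : (Fin N → Fin 2) → ℂ :=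
  ∑ j : Fin N, basisState (fun p => if p = j then (1 : Fin 2) else 0)

lemma hW_col000 (t : Fin 2 × Fin 2 × Fin 2) : hW t (0, 0, 0) = 0 := by
  simp [hW, proj, vecMulVec, Matrix.sub_apply, Matrix.one_apply, ket, vW, Prod.ext_iff]

lemma hW_colW (t : Fin 2 × Fin 2 × Fin 2) :
    hW t (1, 0, 0) + hW t (0, 1, 0) + hW t (0, 0, 1) = 0 := by
  have h3 : ((Real.sqrt 3 : ℝ) : ℂ) * ((Real.sqrt 3 : ℝ) : ℂ) = 3 := by
    rw [← Complex.ofReal_mul, Real.mul_self_sqrt (by norm_num)]; norm_num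
  have hne : ((Real.sqrt 3 : ℝ) : ℂ) ≠ 0 := by
    norm_num [Complex.ofReal_ne_zero, Real.sqrt_ne_zero']
  simp only [hW, proj, vecMulVec_apply, Matrix.sub_apply, Matrix.one_apply, Pi.star_apply]
  simp only [ket, vW, Prod.ext_iff]
  norm_num [Prod.ext_iff]
  field_simp
  ring_nf
  rw [show ((Real.sqrt 3 : ℝ) : ℂ) ^ 2 = 3 by rw [sq, h3]]
  split_ifs <;> ring

lemma mulVec_basisState {n : ℕ} (M : Matrix (Fin n → Fin 2) (Fin n → Fin 2) ℂ)
    (c : Fin n → Fin 2) : M.mulVec (basisState c) = fun f => M f c := by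
  funext f
  simp [Matrix.mulVec, dotProduct, basisState, mul_ite]

lemma sitePos_ne {N : ℕ} (hn : 0 < N) (hN : 3 ≤ N) {a b : ℕ} (hab : a ≤ b)
    (h2 : b - a ≤ 2) (hne : a ≠ b) : sitePos hn a ≠ sitePos hn b := by
  intro h
  have h1 : a % N = b % N := congrArg Fin.val h
  have hdvd : N ∣ b - a := (Nat.modEq_iff_dvd' hab).mp h1
  have := Nat.le_of_dvd (by omega) hdvd
  omega

lemma sum_mulVec' {m : Type*} [Fintype m] [DecidableEq m] {α : Type*} (s : Finset α)
    (M : α → Matrix m m ℂ) (v : m → ℂ) :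
    (∑ i ∈ s, M i).mulVec v = ∑ i ∈ s, (M i).mulVec v := by
  funext f
  simp only [Matrix.mulVec, dotProduct, Matrix.sum_apply, Finset.sum_mul, Finset.sum_apply]
  exact Finset.sum_comm

lemma key (N : ℕ) (hN : 3 ≤ N) (i : ℕ) (f : Fin N → Fin 2) :
    ∑ j : Fin N, embed3 (lt_of_lt_of_le (Nat.zero_lt_succ 2) hN) hW i f
      (fun p => if p = j then (1 : Fin 2) else 0) = 0 := by
  have hn : 0 < N := by omega
  show ∑ j : Fin N, embed3 hn hW i f (fun p => if p = j then (1 : Fin 2) else 0) = 0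
  set s0 := sitePos hn i with hs0
  set s1 := sitePos hn (i + 1) with hs1
  set s2 := sitePos hn (i + 2) with hs2
  have d01 : s0 ≠ s1 := sitePos_ne hn hN (by omega) (by omega) (by omega)
  have d02 : s0 ≠ s2 := sitePos_ne hn hN (by omega) (by omega) (by omega)
  have d12 : s1 ≠ s2 := sitePos_ne hn hN (by omega) (by omega) (by omega)
  have hz : ∀ x ∈ (Finset.univ : Finset (Fin N)), x ∉ ({s0, s1, s2} : Finset (Fin N)) →
      embed3 hn hW i f (fun p => if p = x then (1 : Fin 2) else 0) = 0 := by
    intro x _ hx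
    simp only [Finset.mem_insert, Finset.mem_singleton, not_or] at hx
    obtain ⟨h0, h1, h2⟩ := hx
    simp only [embed3, ← hs0, ← hs1, ← hs2]
    rw [if_neg (Ne.symm h0), if_neg (Ne.symm h1), if_neg (Ne.symm h2)]
    rw [show ((0 : Fin 2), (0 : Fin 2), (0 : Fin 2)) = ((0, 0, 0) : Fin 2 × Fin 2 × Fin 2) from rfl,
      hW_col000, mul_zero]
  rw [← Finset.sum_subset (Finset.subset_univ ({s0, s1, s2} : Finset (Fin N))) hz]
  rw [Finset.sum_insert (by simp [d01, d02]), Finset.sum_insert (by simp [d12]),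
    Finset.sum_singleton]
  have hc : ∀ s : Fin N, s = s0 ∨ s = s1 ∨ s = s2 →
      ((∀ j : Fin N, j ≠ s0 → j ≠ s1 → j ≠ s2 →
          f j = (if j = s then (1 : Fin 2) else 0)) ↔
       (∀ j : Fin N, j ≠ s0 → j ≠ s1 → j ≠ s2 → f j = 0)) := by
    intro s hs
    constructor
    · intro h j h0 h1 h2
      have hjs : j ≠ s := by rcases hs with rfl | rfl | rfl <;> assumption
      have := h j h0 h1 h2
      rwa [if_neg hjs] at this
    · intro h j h0 h1 h2
      have hjs : j ≠ s := by rcases hs with rfl | rfl | rfl <;> assumption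
      rw [if_neg hjs]; exact h j h0 h1 h2
  simp only [embed3, ← hs0, ← hs1, ← hs2]
  simp only [if_pos rfl, if_neg d01.symm, if_neg d02.symm, if_neg d12.symm,
    if_neg d01, if_neg d02, if_neg d12, if_true, eq_self_iff_true]
  simp only [hc s0 (Or.inl rfl), hc s1 (Or.inr (Or.inl rfl)), hc s2 (Or.inr (Or.inr rfl))]
  rw [← mul_add, ← mul_add, ← add_assoc, hW_colW, mul_zero]

/-- on a periodic qubit chain of length `N ≥ 3` with
`H' = Σᵢ (I - |000⟩⟨000| - |W⟩⟨W|)_{i,i+1,i+2}`, the kernel of `H'` contains the two linearly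
independent states `|0^N⟩` and `|W_N⟩`. -/
theorem stmt_19 (N : ℕ) (hN : 3 ≤ N) :
    (∑ i ∈ Finset.range N, embed3 (show 0 < N by omega) hW i).mulVec
        (basisState (fun _ => (0 : Fin 2))) = 0 ∧
    (∑ i ∈ Finset.range N, embed3 (show 0 < N by omega) hW i).mulVec (wChain N) = 0 ∧
    LinearIndependent ℂ ![basisState (fun _ => (0 : Fin 2)), wChain N] := by
  have hn : 0 < N := by omega
  refine ⟨?_, ?_, ?_⟩
  · rw [sum_mulVec']
    apply Finset.sum_eq_zero
    intro i _
    rw [mulVec_basisState]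
    funext f
    exact mul_eq_zero_of_right _ (hW_col000 _)
  · rw [sum_mulVec']
    apply Finset.sum_eq_zero
    intro i _
    rw [wChain, ← Matrix.mulVecLin_apply, map_sum]
    funext f
    simp only [Finset.sum_apply, Matrix.mulVecLin_apply, mulVec_basisState, Pi.zero_apply]
    exact key N hN i f
  · rw [linearIndependent_fin2]
    simp only [Matrix.cons_val_zero, Matrix.cons_val_one, Matrix.head_cons]
    constructor
    · intro h
      have hval : wChain N (fun p => if p = (⟨0, hn⟩ : Fin N) then (1 : Fin 2) else 0) = 1 := by
        rw [wChain, Finset.sum_apply]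
        rw [Finset.sum_eq_single (⟨0, hn⟩ : Fin N)]
        · simp [basisState]
        · intro b _ hb
          refine if_neg fun hEq => ?_
          have h2 := congrFun hEq (⟨0, hn⟩ : Fin N)
          rw [if_pos rfl] at h2
          by_cases hb2 : (⟨0, hn⟩ : Fin N) = b
          · exact hb hb2.symm
          · rw [if_neg hb2] at h2; exact absurd h2 (by decide)
        · intro habs; exact absurd (Finset.mem_univ _) habs
      rw [h] at hval
      exact absurd hval (by simp)
    · intro a h
      have hz : wChain N (fun _ => (0 : Fin 2)) = 0 := by
        rw [wChain, Finset.sum_apply]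
        apply Finset.sum_eq_zero
        intro j _
        refine if_neg fun hEq => ?_
        have h2 := congrFun hEq j
        rw [if_pos rfl] at h2
        exact absurd h2 (by decide)
      have h2 := congrFun h (fun _ => (0 : Fin 2))
      rw [Pi.smul_apply, hz, smul_zero] at h2
      rw [show basisState (fun _ => (0 : Fin 2)) (fun _ => (0 : Fin 2)) = 1 from if_pos rfl] at h2
      exact zero_ne_one h2

end
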